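/- Let R ∈ ℝ satisfy R ≥ Σ_{x∈𝒳} min_{m∈ℳ_x} R_x(m). Then the primal LP value equals the dual value: V(R) = sup_{λ ≥ 0} ( −λR + Σ_{x∈𝒳} min_{m∈ℳ_x} (D_x(m) + λ R_x(m)) ), i.e., V(R) = sup_{λ ≥ 0} g(λ). -/

import Mathlib

open Pointwise

/-- A weighted average with probability weights dominates the minimum. -/
lemma aux_inf'_le_weighted {M : Type} [Fintype M] [Nonempty M] (f z : M → ℝ)
    (hz : ∀ m, 0 ≤ z m) (hz1 : ∑ m, z m = 1) :
    Finset.univ.inf' Finset.univ_nonempty f ≤ ∑ m, z m * f m := by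
  have h1 : Finset.univ.inf' Finset.univ_nonempty f
      = ∑ m, z m * Finset.univ.inf' Finset.univ_nonempty f := by
    rw [← Finset.sum_mul, hz1, one_mul]
  rw [h1]
  exact Finset.sum_le_sum fun m _ =>
    mul_le_mul_of_nonneg_left (Finset.inf'_le _ (Finset.mem_univ m)) (hz m)

/-- Strong duality for the prompt-compression linear program: when the rate `R`
is feasible (i.e. at least the sum over `x` of the minimum of `R_x`), the primal
LP value `V(R)` equals `sup_{λ ≥ 0} g(λ)`, where
`g(λ) = -λR + Σ_x min_m (D_x(m) + λ R_x(m))`. -/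
theorem primal_eq_dual
    (X : Type) [Fintype X] [Nonempty X]
    (M : X → Type) [∀ x, Fintype (M x)] [∀ x, Nonempty (M x)]
    (D Rf : (x : X) → M x → ℝ)
    (hD : ∀ x m, 0 ≤ D x m) (hRf : ∀ x m, 0 ≤ Rf x m)
    (R : ℝ)
    (hR : R ≥ ∑ x, Finset.univ.inf' Finset.univ_nonempty (Rf x)) :
    sInf { v : ℝ | ∃ z : (x : X) → M x → ℝ,
        (∀ x m, 0 ≤ z x m) ∧ (∀ x, ∑ m, z x m = 1) ∧
        (∑ x, ∑ m, Rf x m * z x m ≤ R) ∧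
        v = ∑ x, ∑ m, D x m * z x m } =
    sSup { v : ℝ | ∃ l : ℝ, 0 ≤ l ∧
        v = -l * R + ∑ x, Finset.univ.inf' Finset.univ_nonempty
          (fun m => D x m + l * Rf x m) } := by
  classical
  set Pset : Set ℝ := { v : ℝ | ∃ z : (x : X) → M x → ℝ,
        (∀ x m, 0 ≤ z x m) ∧ (∀ x, ∑ m, z x m = 1) ∧
        (∑ x, ∑ m, Rf x m * z x m ≤ R) ∧
        v = ∑ x, ∑ m, D x m * z x m } with hPsetdef
  set Dset : Set ℝ := { v : ℝ | ∃ l : ℝ, 0 ≤ l ∧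
        v = -l * R + ∑ x, Finset.univ.inf' Finset.univ_nonempty
          (fun m => D x m + l * Rf x m) } with hDsetdef
  -- argmins of Rf
  have hmin : ∀ x : X, ∃ m : M x,
      Finset.univ.inf' Finset.univ_nonempty (Rf x) = Rf x m := by
    intro x
    obtain ⟨m, _, hm⟩ := Finset.exists_mem_eq_inf' Finset.univ_nonempty (Rf x)
    exact ⟨m, hm⟩
  choose m0 hm0 using hmin
  -- a basic feasible point
  have hz0feas : (∑ x, D x (m0 x)) ∈ Pset := by
    refine ⟨fun x m => if m = m0 x then 1 else 0, ?_, ?_, ?_, ?_⟩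
    · intro x m; dsimp only; split_ifs <;> norm_num
    · intro x; simp
    · have : ∀ x : X, ∑ m, Rf x m * (if m = m0 x then (1:ℝ) else 0) = Rf x (m0 x) := by
        intro x; simp
      rw [Finset.sum_congr rfl fun x _ => this x]
      calc ∑ x, Rf x (m0 x)
          = ∑ x, Finset.univ.inf' Finset.univ_nonempty (Rf x) :=
            Finset.sum_congr rfl fun x _ => (hm0 x).symm
        _ ≤ R := hR
    · refine (Finset.sum_congr rfl fun x _ => ?_).symm
      simp
  have hPne : Pset.Nonempty := ⟨_, hz0feas⟩
  have hPbdd : BddBelow Pset := by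
    refine ⟨0, fun v hv => ?_⟩
    obtain ⟨z, hz0, _, _, rfl⟩ := hv
    exact Finset.sum_nonneg fun x _ => Finset.sum_nonneg fun m _ =>
      mul_nonneg (hD x m) (hz0 x m)
  -- weak duality
  have hweak : ∀ d ∈ Dset, ∀ p ∈ Pset, d ≤ p := by
    rintro d ⟨l, hl, rfl⟩ p ⟨z, hz0, hz1, hz2, rfl⟩
    have h1 : ∀ x : X, Finset.univ.inf' Finset.univ_nonempty
        (fun m => D x m + l * Rf x m) ≤ ∑ m, z x m * (D x m + l * Rf x m) :=
      fun x => aux_inf'_le_weighted _ _ (hz0 x) (hz1 x)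
    have h2 : ∀ x : X, ∑ m, z x m * (D x m + l * Rf x m)
        = (∑ m, D x m * z x m) + l * (∑ m, Rf x m * z x m) := by
      intro x
      rw [Finset.mul_sum, ← Finset.sum_add_distrib]
      exact Finset.sum_congr rfl fun m _ => by ring
    have h3 : ∑ x, ((∑ m, D x m * z x m) + l * (∑ m, Rf x m * z x m))
        = (∑ x, ∑ m, D x m * z x m) + l * (∑ x, ∑ m, Rf x m * z x m) := by
      rw [Finset.mul_sum, ← Finset.sum_add_distrib]
    have h4 : ∑ x, Finset.univ.inf' Finset.univ_nonempty
          (fun m => D x m + l * Rf x m)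
        ≤ (∑ x, ∑ m, D x m * z x m) + l * (∑ x, ∑ m, Rf x m * z x m) := by
      rw [← h3]
      exact le_trans (Finset.sum_le_sum fun x _ => h1 x)
        (le_of_eq (Finset.sum_congr rfl fun x _ => h2 x))
    nlinarith [mul_le_mul_of_nonneg_left hz2 hl]
  have hDne : Dset.Nonempty := ⟨_, ⟨0, le_refl 0, rfl⟩⟩
  have hDbdd : BddAbove Dset := ⟨_, fun d hd => hweak d hd _ hz0feas⟩
  -- corner map into the plane
  set W : ((x : X) → M x) → ℝ × ℝ :=
    fun c => (∑ x, Rf x (c x) - R, ∑ x, D x (c x)) with hWdef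
  set Q : Set (ℝ × ℝ) := Set.Ici (0:ℝ) ×ˢ Set.Ici (0:ℝ) with hQdef
  set K : Set (ℝ × ℝ) := convexHull ℝ (Set.range W) + Q with hKdef
  have hQconv : Convex ℝ Q := (convex_Ici (0:ℝ)).prod (convex_Ici 0)
  have hQclosed : IsClosed Q := isClosed_Ici.prod isClosed_Ici
  have hKconv : Convex ℝ K := (convex_convexHull ℝ _).add hQconv
  have hKclosed : IsClosed K :=
    IsClosed.add_left_of_isCompact hQclosed ((Set.finite_range W).isCompact_convexHull (𝕜 := ℝ))
  have hWK : ∀ c, W c ∈ K := by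
    intro c
    have h0 : (0:ℝ×ℝ) ∈ Q := by constructor <;> simp
    have := Set.add_mem_add (subset_convexHull ℝ (Set.range W) ⟨c, rfl⟩) h0
    simpa using this
  have hWQK : ∀ c, ∀ q ∈ Q, W c + q ∈ K := by
    intro c q hq
    exact Set.add_mem_add (subset_convexHull ℝ (Set.range W) ⟨c, rfl⟩) hq
  have hRm0 : ∑ x, Rf x (m0 x) - R ≤ 0 := by
    have : ∑ x, Rf x (m0 x) = ∑ x, Finset.univ.inf' Finset.univ_nonempty (Rf x) :=
      Finset.sum_congr rfl fun x _ => (hm0 x).symm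
    linarith [hR, this.le]
  -- the key step: for every ε > 0, sInf Pset - ε ≤ sSup Dset
  have key : ∀ ε : ℝ, 0 < ε → sInf Pset - ε ≤ sSup Dset := by
    intro ε hε
    set P := sInf Pset with hPdef
    have hnotmem : ((0:ℝ), P - ε) ∉ K := by
      intro hmem
      rw [hKdef, Set.mem_add] at hmem
      obtain ⟨a, ha, b, hb, hab⟩ := hmem
      rw [mem_convexHull_iff_exists_fintype] at ha
      obtain ⟨ι, _, w, g, hw0, hw1, hgs, hgsum⟩ := ha
      choose cfun hcfun using hgs
      set z : (x : X) → M x → ℝ :=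
        fun x m => ∑ i, if cfun i x = m then w i else 0 with hzdef
      have hzf : ∀ (x : X) (f : M x → ℝ),
          ∑ m, f m * z x m = ∑ i, w i * f (cfun i x) := by
        intro x f
        rw [hzdef]
        simp only [Finset.mul_sum]
        rw [Finset.sum_comm]
        refine Finset.sum_congr rfl fun i _ => ?_
        have : ∀ m, f m * (if cfun i x = m then w i else 0)
            = (if cfun i x = m then f m * w i else 0) := by
          intro m; split_ifs <;> ring
        rw [Finset.sum_congr rfl fun m _ => this m, Finset.sum_ite_eq]
        simp [mul_comm]
      have hz0 : ∀ x m, 0 ≤ z x m := by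
        intro x m
        exact Finset.sum_nonneg fun i _ => by
          split_ifs with h
          · exact hw0 i
          · exact le_refl 0
      have hz1 : ∀ x, ∑ m, z x m = 1 := by
        intro x
        have := hzf x (fun _ => 1)
        simpa [hw1] using this
      -- compute the two coordinates of a
      have ha1 : a.1 = ∑ i, w i * (∑ x, Rf x (cfun i x) - R) := by
        rw [← hgsum, Prod.fst_sum]
        refine Finset.sum_congr rfl fun i _ => ?_
        rw [← hcfun i, hWdef]
        simp [smul_eq_mul]
      have ha2 : a.2 = ∑ i, w i * (∑ x, D x (cfun i x)) := by
        rw [← hgsum, Prod.snd_sum]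
        refine Finset.sum_congr rfl fun i _ => ?_
        rw [← hcfun i, hWdef]
        simp [smul_eq_mul]
      have habs : a.1 + b.1 = 0 ∧ a.2 + b.2 = P - ε := by
        constructor
        · exact congrArg Prod.fst hab
        · exact congrArg Prod.snd hab
      have hrate : ∑ x, ∑ m, Rf x m * z x m ≤ R := by
        have h5 : ∑ x, ∑ m, Rf x m * z x m = ∑ i, w i * (∑ x, Rf x (cfun i x)) := by
          rw [Finset.sum_congr rfl fun x _ => hzf x (Rf x), Finset.sum_comm]
          exact Finset.sum_congr rfl fun i _ => by rw [Finset.mul_sum]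
        have h6 : ∑ i, w i * (∑ x, Rf x (cfun i x))
            = a.1 + R := by
          rw [ha1]
          have : ∀ i : ι, w i * (∑ x, Rf x (cfun i x) - R)
              = w i * (∑ x, Rf x (cfun i x)) - w i * R := fun i => by ring
          rw [Finset.sum_congr rfl fun i _ => this i, Finset.sum_sub_distrib,
            ← Finset.sum_mul, hw1, one_mul]
          ring
        have hb1 : 0 ≤ b.1 := hb.1
        rw [h5, h6]
        linarith [habs.1]
      have hobj : ∑ x, ∑ m, D x m * z x m ≤ P - ε := by
        have h5 : ∑ x, ∑ m, D x m * z x m = ∑ i, w i * (∑ x, D x (cfun i x)) := by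
          rw [Finset.sum_congr rfl fun x _ => hzf x (D x), Finset.sum_comm]
          exact Finset.sum_congr rfl fun i _ => by rw [Finset.mul_sum]
        have hb2 : 0 ≤ b.2 := hb.2
        rw [h5, ← ha2]
        linarith [habs.2]
      have hmemP : (∑ x, ∑ m, D x m * z x m) ∈ Pset := ⟨z, hz0, hz1, hrate, rfl⟩
      have := csInf_le hPbdd hmemP
      rw [← hPdef] at this
      linarith
    obtain ⟨f, u, hfu, hK⟩ := geometric_hahn_banach_point_closed hKconv hKclosed hnotmem
    set α := f (1, 0) with hαdef
    set β := f (0, 1) with hβdef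
    have hf : ∀ s t : ℝ, f (s, t) = s * α + t * β := by
      intro s t
      have h1 : ((s, t) : ℝ × ℝ) = s • ((1:ℝ), (0:ℝ)) + t • ((0:ℝ), (1:ℝ)) := by
        simp [Prod.ext_iff]
      rw [h1, map_add, map_smul, map_smul, smul_eq_mul, smul_eq_mul, hαdef, hβdef]
    -- nonnegativity of the dual coefficients
    have hα : 0 ≤ α := by
      by_contra h
      push_neg at h
      have huW : u < f (W (m0)) := hK _ (hWK m0)
      set t : ℝ := (f (W m0) - u) / (-α) with htdef
      have hαpos : 0 < -α := by linarith
      have ht0 : 0 ≤ t := le_of_lt (div_pos (by linarith) hαpos)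
      have hmem : W m0 + (t, 0) ∈ K := hWQK m0 (t, 0) (by constructor <;> simp [ht0])
      have h2 := hK _ hmem
      rw [map_add, hf t 0] at h2
      have h3 : t * (-α) = f (W m0) - u := div_mul_cancel₀ _ (ne_of_gt hαpos)
      nlinarith
    have hβ0 : 0 ≤ β := by
      by_contra h
      push_neg at h
      have huW : u < f (W (m0)) := hK _ (hWK m0)
      set t : ℝ := (f (W m0) - u) / (-β) with htdef
      have hβpos : 0 < -β := by linarith
      have ht0 : 0 ≤ t := le_of_lt (div_pos (by linarith) hβpos)
      have hmem : W m0 + (0, t) ∈ K := hWQK m0 (0, t) (by constructor <;> simp [ht0])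
      have h2 := hK _ hmem
      rw [map_add, hf 0 t] at h2
      have h3 : t * (-β) = f (W m0) - u := div_mul_cancel₀ _ (ne_of_gt hβpos)
      nlinarith
    have hfp : (P - ε) * β < u := by
      have := hfu
      rw [hf 0 (P - ε)] at this
      linarith
    have hβ : 0 < β := by
      rcases lt_or_eq_of_le hβ0 with h | h
      · exact h
      · exfalso
        have huW : u < f (W m0) := hK _ (hWK m0)
        have hfW : f (W m0) = (∑ x, Rf x (m0 x) - R) * α + (∑ x, D x (m0 x)) * β := by
          rw [hWdef]; exact hf _ _
        rw [hfW, ← h] at huW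
        have h4 : (∑ x, Rf x (m0 x) - R) * α ≤ 0 := mul_nonpos_of_nonpos_of_nonneg hRm0 hα
        rw [← h] at hfp
        nlinarith
    set l : ℝ := α / β with hldef
    have hl : 0 ≤ l := div_nonneg hα hβ.le
    -- the dual value at l
    have hmin1 : ∀ x : X, ∃ m : M x,
        Finset.univ.inf' Finset.univ_nonempty (fun m => D x m + l * Rf x m)
          = D x m + l * Rf x m := by
      intro x
      obtain ⟨m, _, hm⟩ := Finset.exists_mem_eq_inf' Finset.univ_nonempty
        (fun m => D x m + l * Rf x m)
      exact ⟨m, hm⟩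
    choose m1 hm1 using hmin1
    have hcorner : u < (∑ x, Rf x (m1 x) - R) * α + (∑ x, D x (m1 x)) * β := by
      have := hK _ (hWK m1)
      rw [hWdef, hf] at this
      exact this
    set v : ℝ := -l * R + ∑ x, Finset.univ.inf' Finset.univ_nonempty
        (fun m => D x m + l * Rf x m) with hvdef
    have hvD : v ∈ Dset := ⟨l, hl, hvdef⟩
    have hvval : v = -l * R + (∑ x, D x (m1 x)) + l * (∑ x, Rf x (m1 x)) := by
      rw [hvdef, Finset.sum_congr rfl fun x _ => hm1 x, Finset.sum_add_distrib,
        Finset.mul_sum]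
      ring
    have hPv : P - ε < v := by
      have hvβ : v * β = -α * R + (∑ x, D x (m1 x)) * β + α * (∑ x, Rf x (m1 x)) := by
        rw [hvval]
        have hlβ : l * β = α := div_mul_cancel₀ _ (ne_of_gt hβ)
        linear_combination (∑ x, Rf x (m1 x) - R) * hlβ
      have h7 : (P - ε) * β < v * β := by linarith [hcorner, hfp, hvβ]
      exact lt_of_mul_lt_mul_right (by linarith [h7]) hβ.le
    calc P - ε ≤ v := hPv.le
      _ ≤ sSup Dset := le_csSup hDbdd hvD
  -- conclude
  apply le_antisymm
  · exact le_of_forall_pos_le_add fun ε hε => by linarith [key ε hε]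
  · exact csSup_le hDne fun d hd => le_csInf hPne fun p hp => hweak d hd p hp
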